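/- For all real x with |x| ≤ 1 and t with |t| < 1, the generating function identity (1 - 2xt + t²)^{-1/2} = Σ_{n=0}^∞ P_n(x) tⁿ holds, where P_n are the Legendre polynomials defined by P_0 = 1, P_1(x) = x and (n+1)P_{n+1}(x) = (2n+1) x P_n(x) - n P_{n-1}(x). -/

import Mathlib

/-- Legendre polynomials as functions `ℝ → ℝ`. -/
noncomputable def legendreP : ℕ → ℝ → ℝ
  | 0, _ => 1
  | 1, x => x
  | (n + 2), x =>
      ((2 * (n : ℝ) + 3) * x * legendreP (n + 1) x - ((n : ℝ) + 1) * legendreP n x)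
        / ((n : ℝ) + 2)


open MeasureTheory intervalIntegral Real Set

namespace LegendreGen

noncomputable def s (x : ℝ) : ℝ := Real.sqrt (1 - x ^ 2)

noncomputable def z (x θ : ℝ) : ℂ := (x : ℂ) + (s x : ℂ) * (Real.cos θ : ℂ) * Complex.I

lemma s_nonneg (x : ℝ) : 0 ≤ s x := Real.sqrt_nonneg _

lemma s_sq {x : ℝ} (hx : |x| ≤ 1) : (s x) ^ 2 = 1 - x ^ 2 := by
  have h : 0 ≤ 1 - x ^ 2 := by nlinarith [abs_nonneg x, sq_abs x]
  simpa [s] using Real.sq_sqrt h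

lemma continuous_z (x : ℝ) : Continuous (z x) := by
  unfold z; fun_prop

lemma norm_z_le {x : ℝ} (hx : |x| ≤ 1) (θ : ℝ) : ‖z x θ‖ ≤ 1 := by
  set c := Real.cos θ with hc
  have hc2 : c ^ 2 ≤ 1 := by rw [hc]; exact Real.cos_sq_le_one θ
  have h1 : Complex.normSq (z x θ) = x ^ 2 + (s x * c) ^ 2 := by
    simp [z, Complex.normSq_apply, ← hc]; ring
  have h2 : Complex.normSq (z x θ) ≤ 1 := by
    rw [h1, mul_pow, s_sq hx]
    have hx2 : x ^ 2 ≤ 1 := by nlinarith [sq_abs x, abs_nonneg x]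
    nlinarith [mul_nonneg (sub_nonneg.2 hx2) (sub_nonneg.2 hc2)]
  have habs : ‖z x θ‖ ^ 2 ≤ 1 := by
    rw [Complex.sq_norm]; exact h2
  have : ‖z x θ‖ ≤ 1 := by
    nlinarith [norm_nonneg (z x θ)]
  simpa using this

/-- key algebraic identity, abstract version -/
lemma key_alg' (n : ℕ) (a sv c sg : ℝ) (hs : sv ^ 2 = 1 - a ^ 2)
    (hσ : sg ^ 2 = 1 - c ^ 2) :
    (sv : ℂ) * (((n : ℂ) + 1) * ((a : ℂ) + sv * c * Complex.I) ^ n *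
          (-Complex.I * sv * sg) * sg
        + ((a : ℂ) + sv * c * Complex.I) ^ (n + 1) * c)
      = -Complex.I * (((n : ℂ) + 1) * ((a : ℂ) + sv * c * Complex.I) ^ n
          - (2 * (n : ℂ) + 3) * a * ((a : ℂ) + sv * c * Complex.I) ^ (n + 1)
          + ((n : ℂ) + 2) * ((a : ℂ) + sv * c * Complex.I) ^ (n + 2)) := by
  have hsC : (sv : ℂ) ^ 2 = 1 - (a : ℂ) ^ 2 := by exact_mod_cast congrArg (fun r : ℝ => (r : ℂ)) hs
  have hσC : (sg : ℂ) ^ 2 = 1 - (c : ℂ) ^ 2 := by exact_mod_cast congrArg (fun r : ℝ => (r : ℂ)) hσ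
  have hI : (Complex.I) ^ 2 = -1 := Complex.I_sq
  set N : ℂ := (n : ℂ)
  set Z : ℂ := (a : ℂ) + sv * c * Complex.I with hZ
  rw [pow_succ, pow_succ, pow_succ]
  linear_combination (Z ^ n) *
    ((-(N + 1) * Complex.I * (sv:ℂ) ^ 2) * hσC
     + (-(N + 1) * Complex.I * (1 - (c:ℂ) ^ 2) + (c:ℂ) ^ 2 * Complex.I
         + (N + 2) * (c:ℂ) ^ 2 * Complex.I ^ 3) * hsC
     + ((a:ℂ) * sv * c + (N + 2) * (1 - (a:ℂ) ^ 2) * (c:ℂ) ^ 2 * Complex.I) * hI)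

lemma intInt_pow (x : ℝ) (k : ℕ) :
    IntervalIntegrable (fun θ => (z x θ) ^ k) volume 0 π :=
  ((continuous_z x).pow k).intervalIntegrable _ _

lemma laplace {x : ℝ} (hx : |x| ≤ 1) : ∀ n : ℕ,
    (legendreP n x : ℂ) * (π : ℂ) = ∫ θ in (0:ℝ)..π, (z x θ) ^ n := by
  intro n
  induction n using Nat.twoStepInduction with
  | zero =>
      simp [legendreP, intervalIntegral.integral_const, Real.pi_pos.le]
  | one =>
      have hrw : z x = fun θ => ((x:ℝ):ℂ) + ((s x * Real.cos θ : ℝ):ℂ) * Complex.I :=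
        funext fun θ => by push_cast [z]; ring
      have h1 : (∫ θ in (0:ℝ)..π, z x θ) = (π : ℂ) * x := by
        rw [hrw, intervalIntegral.integral_add intervalIntegrable_const
          (by apply Continuous.intervalIntegrable; fun_prop : IntervalIntegrable
            (fun θ => ((s x * Real.cos θ : ℝ):ℂ) * Complex.I) volume 0 π)]
        simp only [intervalIntegral.integral_mul_const, intervalIntegral.integral_ofReal,
          intervalIntegral.integral_const_mul, integral_cos, intervalIntegral.integral_const]
        push_cast
        simp
      simp only [pow_one, h1]
      simp [legendreP, mul_comm]
  | more n ih1 ih2 =>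
      set D : ℝ → ℂ := fun θ =>
        ((n : ℂ) + 1) * (z x θ) ^ n * (-Complex.I * (s x) * (Real.sin θ)) * (Real.sin θ)
          + (z x θ) ^ (n + 1) * (Real.cos θ) with hD
      set G : ℝ → ℂ := fun θ =>
        ((n : ℂ) + 1) * (z x θ) ^ n - (2 * (n : ℂ) + 3) * (x : ℂ) * (z x θ) ^ (n + 1)
          + ((n : ℂ) + 2) * (z x θ) ^ (n + 2) with hG
      have hzd : ∀ θ : ℝ, HasDerivAt (z x) (((s x : ℂ)) * (↑(-Real.sin θ)) * Complex.I) θ := by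
        intro θ
        have h1 : HasDerivAt (fun θ : ℝ => ((Real.cos θ : ℝ) : ℂ)) (↑(-Real.sin θ)) θ :=
          (Real.hasDerivAt_cos θ).ofReal_comp
        exact ((h1.const_mul ((s x : ℂ))).mul_const Complex.I).const_add (x : ℂ)
      have hder : ∀ θ ∈ Set.uIcc (0:ℝ) π,
          HasDerivAt (fun θ => (z x θ) ^ (n + 1) * ((Real.sin θ : ℝ) : ℂ)) (D θ) θ := by
        intro θ _
        have hp := (hasDerivAt_pow (n + 1) (z x θ)).comp θ (hzd θ)
        have hsin : HasDerivAt (fun θ : ℝ => ((Real.sin θ : ℝ) : ℂ)) (↑(Real.cos θ)) θ :=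
          (Real.hasDerivAt_sin θ).ofReal_comp
        have := hp.mul hsin
        refine this.congr_deriv ?_
        simp only [hD, Function.comp_def, Nat.add_sub_cancel, Nat.cast_add, Nat.cast_one,
          Complex.ofReal_neg]
        ring
      have hDcont : Continuous D := by rw [hD]; unfold z; fun_prop
      have h0 : (∫ θ in (0:ℝ)..π, D θ) = 0 := by
        rw [integral_eq_sub_of_hasDerivAt hder (hDcont.intervalIntegrable _ _)]
        simp
      have hptw : ∀ θ : ℝ, (s x : ℂ) * D θ = -Complex.I * G θ := by
        intro θ
        have := key_alg' n x (s x) (Real.cos θ) (Real.sin θ) (s_sq hx)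
          (by nlinarith [Real.sin_sq_add_cos_sq θ])
        simpa [hD, hG, z] using this
      have h2 : -Complex.I * (∫ θ in (0:ℝ)..π, G θ) = 0 := by
        rw [← intervalIntegral.integral_const_mul]
        have : (∫ θ in (0:ℝ)..π, -Complex.I * G θ) = ∫ θ in (0:ℝ)..π, (s x : ℂ) * D θ := by
          apply intervalIntegral.integral_congr
          intro θ _; exact (hptw θ).symm
        rw [this, intervalIntegral.integral_const_mul, h0, mul_zero]
      have h3 : (∫ θ in (0:ℝ)..π, G θ) = 0 := by
        have hI : (-Complex.I) ≠ 0 := by simp [Complex.I_ne_zero]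
        exact (mul_eq_zero.mp h2).resolve_left hI
      have h4 : ((n : ℂ) + 1) * (∫ θ in (0:ℝ)..π, (z x θ) ^ n)
          - (2 * (n : ℂ) + 3) * (x : ℂ) * (∫ θ in (0:ℝ)..π, (z x θ) ^ (n + 1))
          + ((n : ℂ) + 2) * (∫ θ in (0:ℝ)..π, (z x θ) ^ (n + 2)) = 0 := by
        rw [← intervalIntegral.integral_const_mul, ← intervalIntegral.integral_const_mul,
          ← intervalIntegral.integral_const_mul, ← intervalIntegral.integral_sub, ← intervalIntegral.integral_add]
        · exact h3
        · exact (((intInt_pow x n).const_mul _).sub ((intInt_pow x (n+1)).const_mul _))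
        · exact ((intInt_pow x (n+2)).const_mul _)
        · exact ((intInt_pow x n).const_mul _)
        · exact ((intInt_pow x (n+1)).const_mul _)
      rw [← ih1, ← ih2] at h4
      have hn2 : ((n : ℂ) + 2) ≠ 0 := by
        intro h
        have : ((n : ℂ) + 2).re = 0 := by rw [h]; simp
        simp [Complex.add_re] at this
        nlinarith [Nat.cast_nonneg (α := ℝ) n]
      have hP : (legendreP (n + 2) x : ℂ)
          = ((2 * (n : ℂ) + 3) * x * (legendreP (n+1) x : ℂ) - ((n : ℂ) + 1) * (legendreP n x : ℂ))
              / ((n : ℂ) + 2) := by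
        show ((((2 * (n : ℝ) + 3) * x * legendreP (n + 1) x - ((n : ℝ) + 1) * legendreP n x)
          / ((n : ℝ) + 2) : ℝ) : ℂ) = _
        push_cast
        ring
      rw [hP]
      field_simp
      linear_combination (-(1:ℂ)) * h4

lemma quad_pos {x t : ℝ} (hx : |x| ≤ 1) (ht : |t| < 1) : 0 < 1 - 2 * x * t + t ^ 2 := by
  have h1 : x * t ≤ |t| := by
    calc x * t ≤ |x * t| := le_abs_self _
      _ = |x| * |t| := abs_mul x t
      _ ≤ 1 * |t| := by nlinarith [abs_nonneg t]
      _ = |t| := one_mul _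
  nlinarith [sq_abs t, mul_pos (sub_pos.2 ht) (sub_pos.2 ht)]
/-- abstract inverse formula -/
lemma inv_formula (p q D : ℝ) (hD : D = p ^ 2 + q ^ 2) (h : D ≠ 0) :
    ((p : ℂ) - (q : ℂ) * Complex.I)⁻¹ = ((p / D : ℝ) : ℂ) + ((q / D : ℝ) : ℂ) * Complex.I := by
  rw [eq_comm]
  apply eq_inv_of_mul_eq_one_left
  have hI : (Complex.I) ^ 2 = -1 := Complex.I_sq
  have hDC : (D : ℂ) ≠ 0 := by exact_mod_cast h
  have hDC' : (D : ℂ) = (p : ℂ) ^ 2 + (q : ℂ) ^ 2 := by exact_mod_cast hD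
  push_cast
  field_simp
  linear_combination (-(q:ℂ)^2) * hI + (-(1:ℂ)) * hDC'

/-- abstract derivative-of-argument formula -/
lemma deriv_im_formula (p r b sn cs : ℝ) (hr : r ≠ 0) (hD : p ^ 2 + b ^ 2 * cs ^ 2 ≠ 0)
    (hr2 : r ^ 2 = p ^ 2 + b ^ 2) (hsc : sn ^ 2 + cs ^ 2 = 1) :
    p / (p ^ 2 + b ^ 2 * cs ^ 2)
      = -(1/r) * ((-(r * sn)) * (p * sn) / ((p * sn) ^ 2 + (r * cs) ^ 2)
          - (p * cs) * (r * cs) / ((p * sn) ^ 2 + (r * cs) ^ 2)) := by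
  have hd2 : (p * sn) ^ 2 + (r * cs) ^ 2 = p ^ 2 + b ^ 2 * cs ^ 2 := by
    linear_combination cs ^ 2 * hr2 + p ^ 2 * hsc
  rw [hd2]
  field_simp
  linear_combination (-p) * hsc

section eval
variable {x t : ℝ} (hx : |x| ≤ 1) (ht : |t| < 1)

include hx ht in
lemma tx_lt : t * x < 1 := by
  calc t * x ≤ |t * x| := le_abs_self _
    _ = |t| * |x| := abs_mul t x
    _ ≤ |t| * 1 := by nlinarith [abs_nonneg t]
    _ < 1 := by linarith

include hx ht in
lemma integral_inv_eval :
    (∫ θ in (0:ℝ)..π, (1 - (t : ℂ) * z x θ)⁻¹)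
      = ((π / Real.sqrt (1 - 2 * x * t + t ^ 2) : ℝ) : ℂ) := by
  obtain ⟨p, hpd⟩ : ∃ p : ℝ, p = 1 - t * x := ⟨_, rfl⟩
  obtain ⟨b, hbd⟩ : ∃ b : ℝ, b = t * s x := ⟨_, rfl⟩
  have hp : 0 < p := by have := tx_lt hx ht; rw [hpd]; linarith
  have hsum : p ^ 2 + b ^ 2 = 1 - 2 * x * t + t ^ 2 := by
    have := s_sq hx
    rw [hpd, hbd, mul_pow, this]
    ring
  have hpos : 0 < 1 - 2 * x * t + t ^ 2 := by nlinarith [sq_nonneg b]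
  obtain ⟨r, hrd⟩ : ∃ r : ℝ, r = Real.sqrt (1 - 2 * x * t + t ^ 2) := ⟨_, rfl⟩
  have hr2 : r ^ 2 = p ^ 2 + b ^ 2 := by rw [hrd, Real.sq_sqrt hpos.le, hsum]
  have hr : 0 < r := by rw [hrd]; exact Real.sqrt_pos.mpr hpos
  have hden : ∀ θ : ℝ, 0 < p ^ 2 + b ^ 2 * (Real.cos θ) ^ 2 := by
    intro θ
    nlinarith [sq_nonneg (b * Real.cos θ), pow_pos hp 2]
  -- decomposition of the integrand
  have hfg : ∀ θ : ℝ, (1 - (t : ℂ) * z x θ)⁻¹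
      = ((p / (p ^ 2 + b ^ 2 * (Real.cos θ) ^ 2) : ℝ) : ℂ)
        + ((b * Real.cos θ / (p ^ 2 + b ^ 2 * (Real.cos θ) ^ 2) : ℝ) : ℂ) * Complex.I := by
    intro θ
    have hz : (1 : ℂ) - (t : ℂ) * z x θ = ((p : ℝ) : ℂ) - ((b * Real.cos θ : ℝ) : ℂ) * Complex.I := by
      rw [hpd, hbd]
      simp only [z]
      push_cast
      ring
    rw [hz]
    exact inv_formula p (b * Real.cos θ) (p ^ 2 + b ^ 2 * (Real.cos θ) ^ 2)
      (by ring) (hden θ).ne'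
  have hcf : Continuous fun θ : ℝ => p / (p ^ 2 + b ^ 2 * (Real.cos θ) ^ 2) := by
    apply Continuous.div continuous_const (by fun_prop)
    intro θ; exact (hden θ).ne'
  have hcg : Continuous fun θ : ℝ => b * Real.cos θ / (p ^ 2 + b ^ 2 * (Real.cos θ) ^ 2) := by
    apply Continuous.div (by fun_prop) (by fun_prop)
    intro θ; exact (hden θ).ne'
  -- imaginary part vanishes by symmetry
  have hg0 : (∫ θ in (0:ℝ)..π, b * Real.cos θ / (p ^ 2 + b ^ 2 * (Real.cos θ) ^ 2)) = 0 := by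
    obtain ⟨g, hgd⟩ : ∃ g : ℝ → ℝ, g = fun θ => b * Real.cos θ / (p ^ 2 + b ^ 2 * (Real.cos θ) ^ 2) :=
      ⟨_, rfl⟩
    rw [← hgd]
    have hgsym : ∀ θ : ℝ, g (π - θ) = - g θ := by
      intro θ
      rw [hgd]
      simp only [Real.cos_pi_sub]
      ring
    have h1 : (∫ θ in (0:ℝ)..π, g (π - θ)) = ∫ θ in (0:ℝ)..π, g θ := by
      have := intervalIntegral.integral_comp_sub_left g π (a := 0) (b := π)
      simpa using this
    have h2 : (∫ θ in (0:ℝ)..π, g (π - θ)) = - ∫ θ in (0:ℝ)..π, g θ := by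
      rw [show (fun θ => g (π - θ)) = fun θ => -g θ from funext hgsym]
      exact intervalIntegral.integral_neg
    linarith [h1.symm.trans h2]
  -- real part via explicit antiderivative
  obtain ⟨w, hwd⟩ : ∃ w : ℝ → ℂ,
      w = fun θ => ((p * Real.sin θ : ℝ) : ℂ) + ((r * Real.cos θ : ℝ) : ℂ) * Complex.I := ⟨_, rfl⟩
  have hre : ∀ θ, (w θ).re = p * Real.sin θ := by
    intro θ; rw [hwd]
    simp only [Complex.add_re, Complex.mul_re, Complex.I_re, Complex.I_im,
      Complex.ofReal_re, Complex.ofReal_im]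
    ring
  have him : ∀ θ, (w θ).im = r * Real.cos θ := by
    intro θ; rw [hwd]
    simp only [Complex.add_im, Complex.mul_im, Complex.I_re, Complex.I_im,
      Complex.ofReal_re, Complex.ofReal_im]
    ring
  have hw_slit : ∀ θ ∈ Set.uIcc (0:ℝ) π, w θ ∈ Complex.slitPlane := by
    intro θ hθ
    rw [Set.uIcc_of_le Real.pi_pos.le] at hθ
    rw [Complex.mem_slitPlane_iff, hre, him]
    rcases lt_or_eq_of_le (Real.sin_nonneg_of_nonneg_of_le_pi hθ.1 hθ.2) with h | h
    · left; positivity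
    · right
      have hc : (Real.cos θ) ^ 2 = 1 := by nlinarith [Real.sin_sq_add_cos_sq θ]
      intro hcontra
      have hc0 : Real.cos θ = 0 := by
        rcases mul_eq_zero.mp hcontra with h' | h'
        · exact absurd h' hr.ne'
        · exact h'
      rw [hc0] at hc; norm_num at hc
  have hw_deriv : ∀ θ : ℝ, HasDerivAt w
      (((p * Real.cos θ : ℝ) : ℂ) + ((-(r * Real.sin θ) : ℝ) : ℂ) * Complex.I) θ := by
    intro θ
    rw [hwd]
    have h1 : HasDerivAt (fun θ : ℝ => ((p * Real.sin θ : ℝ) : ℂ)) ((p * Real.cos θ : ℝ) : ℂ) θ := by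
      have := ((Real.hasDerivAt_sin θ).const_mul p).ofReal_comp
      convert this using 1
    have h2 : HasDerivAt (fun θ : ℝ => ((r * Real.cos θ : ℝ) : ℂ) * Complex.I)
        (((-(r * Real.sin θ) : ℝ) : ℂ) * Complex.I) θ := by
      have h3 := (((Real.hasDerivAt_cos θ).const_mul r).ofReal_comp).mul_const Complex.I
      refine h3.congr_deriv ?_
      push_cast; ring
    exact h1.add h2
  have hG : ∀ θ ∈ Set.uIcc (0:ℝ) π,
      HasDerivAt (fun θ => -(1/r) * (Complex.log (w θ)).im)
        (p / (p ^ 2 + b ^ 2 * (Real.cos θ) ^ 2)) θ := by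
    intro θ hθ
    have hlog := (hw_deriv θ).clog_real (hw_slit θ hθ)
    have himd : HasDerivAt (fun θ => (Complex.log (w θ)).im)
        (((((p * Real.cos θ : ℝ) : ℂ) + ((-(r * Real.sin θ) : ℝ) : ℂ) * Complex.I) / w θ).im) θ :=
      Complex.imCLM.hasFDerivAt.comp_hasDerivAt θ hlog
    have hd := himd.const_mul (-(1/r))
    refine hd.congr_deriv (Eq.symm ?_)
    rw [Complex.div_im]
    have hnum : ((((p * Real.cos θ : ℝ) : ℂ) + ((-(r * Real.sin θ) : ℝ) : ℂ) * Complex.I)).im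
        = -(r * Real.sin θ) := by
      simp only [Complex.add_im, Complex.mul_im, Complex.I_re, Complex.I_im,
        Complex.ofReal_re, Complex.ofReal_im]
      ring
    have hnum2 : ((((p * Real.cos θ : ℝ) : ℂ) + ((-(r * Real.sin θ) : ℝ) : ℂ) * Complex.I)).re
        = p * Real.cos θ := by
      simp only [Complex.add_re, Complex.mul_re, Complex.I_re, Complex.I_im,
        Complex.ofReal_re, Complex.ofReal_im]
      ring
    have hnsq : Complex.normSq (w θ) = (p * Real.sin θ) ^ 2 + (r * Real.cos θ) ^ 2 := by
      rw [Complex.normSq_apply, hre, him]; ring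
    rw [hnum, hnum2, hre, him, hnsq]
    exact deriv_im_formula p r b (Real.sin θ) (Real.cos θ) hr.ne' (hden θ).ne' hr2
      (Real.sin_sq_add_cos_sq θ)
  have hf_int : (∫ θ in (0:ℝ)..π, p / (p ^ 2 + b ^ 2 * (Real.cos θ) ^ 2)) = π / r := by
    rw [integral_eq_sub_of_hasDerivAt hG (hcf.intervalIntegrable _ _)]
    have hw0 : w 0 = ((r : ℝ) : ℂ) * Complex.I := by
      rw [hwd]; push_cast [Real.sin_zero, Real.cos_zero]; ring
    have hwpi : w π = ((r : ℝ) : ℂ) * (-Complex.I) := by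
      rw [hwd]; push_cast [Real.sin_pi, Real.cos_pi]; ring
    rw [hw0, hwpi, Complex.log_im, Complex.log_im,
      Complex.arg_real_mul _ hr, Complex.arg_real_mul _ hr, Complex.arg_I, Complex.arg_neg_I]
    field_simp
    ring
  -- assemble
  rw [← hrd]
  calc (∫ θ in (0:ℝ)..π, (1 - (t : ℂ) * z x θ)⁻¹)
      = ∫ θ in (0:ℝ)..π, (((p / (p ^ 2 + b ^ 2 * (Real.cos θ) ^ 2) : ℝ) : ℂ)
          + ((b * Real.cos θ / (p ^ 2 + b ^ 2 * (Real.cos θ) ^ 2) : ℝ) : ℂ) * Complex.I) :=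
        intervalIntegral.integral_congr fun θ _ => hfg θ
    _ = (∫ θ in (0:ℝ)..π, ((p / (p ^ 2 + b ^ 2 * (Real.cos θ) ^ 2) : ℝ) : ℂ))
          + ∫ θ in (0:ℝ)..π, ((b * Real.cos θ / (p ^ 2 + b ^ 2 * (Real.cos θ) ^ 2) : ℝ) : ℂ)
            * Complex.I := by
        apply intervalIntegral.integral_add
        · exact (Complex.continuous_ofReal.comp hcf).intervalIntegrable _ _
        · exact ((Complex.continuous_ofReal.comp hcg).mul continuous_const).intervalIntegrable _ _
    _ = (((∫ θ in (0:ℝ)..π, p / (p ^ 2 + b ^ 2 * (Real.cos θ) ^ 2)) : ℝ) : ℂ)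
          + (((∫ θ in (0:ℝ)..π, b * Real.cos θ / (p ^ 2 + b ^ 2 * (Real.cos θ) ^ 2)) : ℝ) : ℂ)
            * Complex.I := by
        rw [intervalIntegral.integral_mul_const, intervalIntegral.integral_ofReal,
          intervalIntegral.integral_ofReal]
    _ = ((π / r : ℝ) : ℂ) := by rw [hf_int, hg0]; simp
end eval

end LegendreGen

open LegendreGen

/-- Generating function of the Legendre polynomials:
`1/√(1 - 2xt + t²) = Σ_{n≥0} P_n(x) tⁿ` for `|x| ≤ 1`, `|t| < 1`. -/
theorem legendre_generating_function (x t : ℝ) (hx : |x| ≤ 1) (ht : |t| < 1) :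
    HasSum (fun n : ℕ => legendreP n x * t ^ n)
      (1 / Real.sqrt (1 - 2 * x * t + t ^ 2)) := by
  have hb : ∀ θ : ℝ, ‖(t : ℂ) * z x θ‖ ≤ |t| := by
    intro θ
    rw [norm_mul, Complex.norm_real]
    have h1 : ‖(t : ℝ)‖ * ‖z x θ‖ ≤ |t| * 1 :=
      mul_le_mul_of_nonneg_left (norm_z_le hx θ) (abs_nonneg t)
    simpa using h1
  have hnorm : ∀ (n : ℕ) (θ : ℝ), ‖((t : ℂ) * z x θ) ^ n‖ ≤ |t| ^ n := by
    intro n θ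
    rw [norm_pow]
    exact pow_le_pow_left₀ (norm_nonneg _) (hb θ) n
  have htz : ∀ θ : ℝ, ‖(t : ℂ) * z x θ‖ < 1 := fun θ => lt_of_le_of_lt (hb θ) ht
  set μ : Measure ℝ := volume.restrict (Set.Ioc (0:ℝ) π) with hμ
  have hInt : ∀ n : ℕ, Integrable (fun θ => ((t : ℂ) * z x θ) ^ n) μ := by
    intro n
    rw [hμ]
    exact (((Complex.continuous_ofReal.comp continuous_const).mul (continuous_z x)).pow n).integrableOn_Ioc
  have hIntNorm : Summable fun n : ℕ => ∫ θ, ‖((t : ℂ) * z x θ) ^ n‖ ∂μ := by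
    apply Summable.of_nonneg_of_le (fun n => integral_nonneg fun θ => norm_nonneg _)
      (fun n => ?_) ((summable_geometric_of_lt_one (abs_nonneg t) ht).mul_left π)
    calc (∫ θ, ‖((t : ℂ) * z x θ) ^ n‖ ∂μ) ≤ ∫ _, |t| ^ n ∂μ := by
          apply integral_mono ((hInt n).norm) (integrable_const _)
          intro θ
          exact hnorm n θ
      _ = π * |t| ^ n := by
          rw [hμ, MeasureTheory.setIntegral_const, smul_eq_mul, Real.volume_real_Ioc]
          simp [Real.pi_pos.le]
  have hswap := MeasureTheory.hasSum_integral_of_summable_integral_norm hInt hIntNorm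
  have htsum : ∀ θ : ℝ, (∑' n : ℕ, ((t : ℂ) * z x θ) ^ n) = (1 - (t : ℂ) * z x θ)⁻¹ :=
    fun θ => tsum_geometric_of_norm_lt_one (htz θ)
  rw [show (fun θ => ∑' n : ℕ, ((t : ℂ) * z x θ) ^ n) = fun θ => (1 - (t : ℂ) * z x θ)⁻¹
      from funext htsum] at hswap
  have hioc : ∀ (F : ℝ → ℂ), (∫ θ, F θ ∂μ) = ∫ θ in (0:ℝ)..π, F θ := by
    intro F
    rw [hμ, intervalIntegral.integral_of_le Real.pi_pos.le]
  rw [hioc] at hswap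
  have hswap2 : HasSum (fun n : ℕ => ∫ θ in (0:ℝ)..π, ((t : ℂ) * z x θ) ^ n)
      ((π / Real.sqrt (1 - 2 * x * t + t ^ 2) : ℝ) : ℂ) := by
    rw [← integral_inv_eval hx ht]
    have hf : (fun n : ℕ => ∫ θ in (0:ℝ)..π, ((t : ℂ) * z x θ) ^ n)
        = fun n => ∫ θ, ((t : ℂ) * z x θ) ^ n ∂μ := funext fun n => (hioc _).symm
    rw [hf]
    exact hswap
  have hterm : ∀ n : ℕ, (∫ θ in (0:ℝ)..π, ((t : ℂ) * z x θ) ^ n)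
      = ((legendreP n x * t ^ n : ℝ) : ℂ) * (π : ℂ) := by
    intro n
    have h1 : (∫ θ in (0:ℝ)..π, ((t : ℂ) * z x θ) ^ n)
        = ((t : ℂ)) ^ n * ∫ θ in (0:ℝ)..π, (z x θ) ^ n := by
      rw [← intervalIntegral.integral_const_mul]
      congr 1
      funext θ
      rw [mul_pow]
    rw [h1, ← laplace hx n]
    push_cast
    ring
  have hfinal : HasSum (fun n : ℕ => ((legendreP n x * t ^ n : ℝ) : ℂ))
      ((1 / Real.sqrt (1 - 2 * x * t + t ^ 2) : ℝ) : ℂ) := by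
    have hpi : (π : ℂ) ≠ 0 := by exact_mod_cast Real.pi_ne_zero
    have := hswap2.div_const (π : ℂ)
    rw [show (fun n : ℕ => (∫ θ in (0:ℝ)..π, ((t : ℂ) * z x θ) ^ n) / (π:ℂ))
        = fun n : ℕ => ((legendreP n x * t ^ n : ℝ) : ℂ) from funext fun n => by
          rw [hterm n, mul_div_assoc, div_self hpi, mul_one]] at this
    have hS : ((Real.sqrt (1 - 2 * x * t + t ^ 2) : ℝ) : ℂ) ≠ 0 := by
      have h1 : 0 < 1 - 2 * x * t + t ^ 2 := quad_pos hx ht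
      have := Real.sqrt_pos.mpr h1
      exact_mod_cast this.ne'
    rw [show ((π / Real.sqrt (1 - 2 * x * t + t ^ 2) : ℝ) : ℂ) / (π : ℂ)
        = ((1 / Real.sqrt (1 - 2 * x * t + t ^ 2) : ℝ) : ℂ) by
      push_cast
      field_simp] at this
    exact this
  exact Complex.hasSum_ofReal.mp hfinal
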